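/- Let H be a connected hypergraph with minimal edge cut F, let H_i (i ∈ I) be the connected components of H \ F, and let α: F → I^[2] be a standard edge cut assignment. If G' is a connected component of the multigraph G^α with vertex set J = V(G'), then the subhypergraph of H^α induced by the union of the vertex sets V(H_i), i ∈ J, is a connected component of H^α. -/

import Mathlib

set_option linter.unusedSectionVars false

universe u

variable {V : Type u} {β : Type u} {I : Type u}

/-- A hypergraph on vertex type `V` with edge-index type `β`: a finite vertex set,
a finite (multi)set of edges indexed by `β`, and an incidence map giving the
vertex set of each edge. -/
structure HGraph (V β : Type u) [DecidableEq V] where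
  verts : Finset V
  edges : Finset β
  inc : β → Finset V
  inc_sub : ∀ e ∈ edges, inc e ⊆ verts

namespace HGraph

variable [DecidableEq V] [DecidableEq β] [DecidableEq I]

/-- A walk in a hypergraph: an alternating sequence of vertices and edges,
consecutive vertices being distinct and both contained in the intervening edge. -/
inductive Walk (H : HGraph V β) : V → V → Type u where
  | nil (v : V) (hv : v ∈ H.verts) : Walk H v v
  | cons (u v w : V) (e : β) (he : e ∈ H.edges) (hu : u ∈ H.inc e) (hv : v ∈ H.inc e)
      (hne : u ≠ v) (p : Walk H v w) : Walk H u w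

namespace Walk

/-- The list of steps `(v_{i-1}, e_i, v_i)` of a walk. -/
def steps {H : HGraph V β} : ∀ {u v : V}, H.Walk u v → List (V × β × V)
  | _, _, .nil _ _ => []
  | _, _, .cons u a _ e _ _ _ _ p => (u, e, a) :: p.steps

/-- The list of edges traversed by a walk, in order. -/
def edgeList {H : HGraph V β} {u v : V} (w : H.Walk u v) : List β :=
  w.steps.map (fun s => s.2.1)

/-- The anchors of a walk: the vertices appearing in its sequence. -/
def anchors {H : HGraph V β} {u v : V} (w : H.Walk u v) : List V :=
  u :: w.steps.map (fun s => s.2.2)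

end Walk

/-- A closed trail: a closed walk of length at least 2 with pairwise distinct edges. -/
structure ClosedTrail (H : HGraph V β) where
  base : V
  walk : H.Walk base base
  two_le : 2 ≤ walk.edgeList.length
  nodup : walk.edgeList.Nodup

/-- The closed trail `T` traverses the vertex `u` via the edge `e`, i.e. `eu` or `ue`
is a subsequence of the walk. -/
def ClosedTrail.traverses {H : HGraph V β} (T : H.ClosedTrail) (u : V) (e : β) : Prop :=
  ∃ s ∈ T.walk.steps, s.2.1 = e ∧ (s.1 = u ∨ s.2.2 = u)

/-- An Euler family: a family of pairwise edge-disjoint and anchor-disjoint closed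
trails jointly traversing every edge exactly once. -/
def IsEulerFamily (H : HGraph V β) {κ : Type} (T : κ → H.ClosedTrail) : Prop :=
  (∀ k l, k ≠ l → ∀ e, e ∈ (T k).walk.edgeList → e ∉ (T l).walk.edgeList) ∧
  (∀ k l, k ≠ l → ∀ v, v ∈ (T k).walk.anchors → v ∉ (T l).walk.anchors) ∧
  (∀ e ∈ H.edges, ∃ k, e ∈ (T k).walk.edgeList)

def HasEulerFamily (H : HGraph V β) : Prop :=
  ∃ (κ : Type) (T : κ → H.ClosedTrail), H.IsEulerFamily T

/-- A non-empty Euler family. -/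
def HasNonemptyEulerFamily (H : HGraph V β) : Prop :=
  ∃ (κ : Type) (T : κ → H.ClosedTrail), Nonempty κ ∧ H.IsEulerFamily T

/-- An Euler family is spanning if every vertex is an anchor of some trail in it. -/
def IsSpanningFamily (H : HGraph V β) {κ : Type} (T : κ → H.ClosedTrail) : Prop :=
  ∀ v ∈ H.verts, ∃ k, v ∈ (T k).walk.anchors

/-- An Euler tour: a closed trail traversing every edge (exactly once). -/
def IsEulerTour (H : HGraph V β) (T : H.ClosedTrail) : Prop :=
  ∀ e ∈ H.edges, e ∈ T.walk.edgeList

def HasEulerTour (H : HGraph V β) : Prop := ∃ T : H.ClosedTrail, H.IsEulerTour T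

/-- A hypergraph is connected if every two vertices are joined by a walk. -/
def Connected (H : HGraph V β) : Prop :=
  ∀ u ∈ H.verts, ∀ v ∈ H.verts, Nonempty (H.Walk u v)

/-- `H \ F` : deletion of the edges in `F`. -/
def edel (H : HGraph V β) (F : Finset β) : HGraph V β where
  verts := H.verts
  edges := H.edges \ F
  inc := H.inc
  inc_sub := fun e he => H.inc_sub e (Finset.mem_sdiff.mp he).1

/-- The subhypergraph induced by a vertex set `U`. -/
def induce (H : HGraph V β) (U : Finset V) : HGraph V β where
  verts := U
  edges := H.edges.filter (fun e => (H.inc e ∩ U).Nonempty)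
  inc := fun e => H.inc e ∩ U
  inc_sub := fun _ _ => Finset.inter_subset_right

/-- The degree of a vertex: the number of edges incident with it. -/
def degree (H : HGraph V β) (v : V) : ℕ :=
  (H.edges.filter (fun e => v ∈ H.inc e)).card

/-- `[S, V - S]_H` : the set of edges meeting both `S` and its complement. -/
def cutSet (H : HGraph V β) (S : Finset V) : Finset β :=
  H.edges.filter (fun e => (H.inc e ∩ S).Nonempty ∧ (H.inc e ∩ (H.verts \ S)).Nonempty)

/-- An edge cut: a set of edges of the form `[S, V - S]_H` for nonempty proper `S`. -/
def IsEdgeCut (H : HGraph V β) (F : Finset β) : Prop :=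
  ∃ S : Finset V, S ⊆ H.verts ∧ S.Nonempty ∧ S ≠ H.verts ∧ F = H.cutSet S

/-- A minimal edge cut: an edge cut no proper subset of which is an edge cut. -/
def IsMinimalEdgeCut (H : HGraph V β) (F : Finset β) : Prop :=
  H.IsEdgeCut F ∧ ∀ F' ⊂ F, ¬ H.IsEdgeCut F'

/-- `C` is the vertex set of a connected component of `H` : nonempty, connected as an
induced subhypergraph, and closed under the edges of `H`. -/
def IsComponent (H : HGraph V β) (C : Finset V) : Prop :=
  C.Nonempty ∧ C ⊆ H.verts ∧ (H.induce C).Connected ∧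
    ∀ e ∈ H.edges, (H.inc e ∩ C).Nonempty → H.inc e ⊆ C

/-- `P` is a partition of `V(H)` into unions of the vertex sets of the connected
components of `H \ F`. -/
def IsCompUnionPartition (H : HGraph V β) (F : Finset β) (P : I → Finset V) : Prop :=
  (∀ i, (P i).Nonempty) ∧ (∀ i, P i ⊆ H.verts) ∧ (∀ v ∈ H.verts, ∃! i, v ∈ P i) ∧
    ∀ e ∈ H.edges, e ∉ F → ∀ i, (H.inc e ∩ P i).Nonempty → H.inc e ⊆ P i

/-- `P` lists exactly the vertex sets of the connected components of `H \ F`. -/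
def IsComponentPartition (H : HGraph V β) (F : Finset β) (P : I → Finset V) : Prop :=
  H.IsCompUnionPartition F P ∧ ∀ i, ((H.edel F).induce (P i)).Connected

/-- The union `P i ∪ P j` associated with an unordered pair. -/
def pairFinset (P : I → Finset V) : Sym2 I → Finset V :=
  Sym2.lift ⟨fun i j => P i ∪ P j, fun _ _ => Finset.union_comm _ _⟩

/-- `α : F → I^[2]` is an edge cut assignment. -/
def IsECA (H : HGraph V β) (F : Finset β) (P : I → Finset V) (α : β → Sym2 I) : Prop :=
  ∀ f ∈ F, ∀ i j, α f = s(i, j) →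
    (H.inc f ∩ P i).Nonempty ∧ (H.inc f ∩ P j).Nonempty ∧
      (i = j → 2 ≤ (H.inc f ∩ P i).card)

/-- The hypergraph `H^α` associated with an edge cut assignment `α`:
each `f ∈ F` is replaced by `f^α = f ∩ (V_i ∪ V_j)` where `α f = ij`. -/
def assign (H : HGraph V β) (F : Finset β) (P : I → Finset V) (α : β → Sym2 I) :
    HGraph V β where
  verts := H.verts
  edges := H.edges
  inc := fun e => if e ∈ F then H.inc e ∩ pairFinset P (α e) else H.inc e
  inc_sub := by
    intro e he
    try dsimp only
    split
    · exact Finset.inter_subset_left.trans (H.inc_sub e he)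
    · exact H.inc_sub e he

/-- The multigraph `G^α` associated with an edge cut assignment `α`, viewed as a
hypergraph on the vertex set `I` whose edges (indexed by `F`) are the pairs `α f`. -/
def assignGraph [Fintype I] (F : Finset β) (α : β → Sym2 I) : HGraph I β where
  verts := Finset.univ
  edges := F
  inc := fun f => Sym2.lift ⟨fun i j => ({i, j} : Finset I), fun _ _ => Finset.pair_comm _ _⟩ (α f)
  inc_sub := fun _ _ => fun _ _ => Finset.mem_univ _

/-- The collapsed hypergraph `H ∘ S` with collapsed vertex `uc`. -/
def collapse (H : HGraph V β) (S : Finset V) (uc : V) : HGraph V β where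
  verts := (H.verts \ S) ∪ {uc}
  edges := H.edges.filter (fun e => (H.inc e ∩ (H.verts \ S)).Nonempty)
  inc := fun e => if (H.inc e ∩ S).Nonempty then (H.inc e \ S) ∪ {uc} else H.inc e
  inc_sub := by
    intro e he
    rw [Finset.mem_filter] at he
    try dsimp only
    split
    · intro x hx
      rcases Finset.mem_union.mp hx with h | h
      · exact Finset.mem_union_left _
          (Finset.mem_sdiff.mpr ⟨H.inc_sub e he.1 (Finset.mem_sdiff.mp h).1,
            (Finset.mem_sdiff.mp h).2⟩)
      · exact Finset.mem_union_right _ h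
    · intro x hx
      rename_i h
      exact Finset.mem_union_left _ (Finset.mem_sdiff.mpr
        ⟨H.inc_sub e he.1 hx, fun hxS => h ⟨x, Finset.mem_inter.mpr ⟨hx, hxS⟩⟩⟩)

/-- Lifting a walk along an inclusion of hypergraphs. -/
def Walk.lift {H1 H2 : HGraph V β} (hv : H1.verts ⊆ H2.verts) (he : H1.edges ⊆ H2.edges)
    (hi : ∀ e ∈ H1.edges, H1.inc e ⊆ H2.inc e) : ∀ {u v : V}, H1.Walk u v → H2.Walk u v
  | _, _, .nil x hx => .nil x (hv hx)
  | _, _, .cons u a w e hee hu hvv hne p =>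
      .cons u a w e (he hee) (hi e hee hu) (hi e hee hvv) hne (Walk.lift hv he hi p)

theorem Walk.steps_lift {H1 H2 : HGraph V β} (hv : H1.verts ⊆ H2.verts)
    (he : H1.edges ⊆ H2.edges) (hi : ∀ e ∈ H1.edges, H1.inc e ⊆ H2.inc e)
    {u v : V} (w : H1.Walk u v) : (w.lift hv he hi).steps = w.steps := by
  induction w with
  | nil => rfl
  | cons u a w e hee hu hvv hne p ih => simp [Walk.lift, Walk.steps, ih]

theorem Walk.edgeList_lift {H1 H2 : HGraph V β} (hv : H1.verts ⊆ H2.verts)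
    (he : H1.edges ⊆ H2.edges) (hi : ∀ e ∈ H1.edges, H1.inc e ⊆ H2.inc e)
    {u v : V} (w : H1.Walk u v) : (w.lift hv he hi).edgeList = w.edgeList := by
  simp [Walk.edgeList, Walk.steps_lift]

theorem Walk.anchors_lift {H1 H2 : HGraph V β} (hv : H1.verts ⊆ H2.verts)
    (he : H1.edges ⊆ H2.edges) (hi : ∀ e ∈ H1.edges, H1.inc e ⊆ H2.inc e)
    {u v : V} (w : H1.Walk u v) : (w.lift hv he hi).anchors = w.anchors := by
  simp [Walk.anchors, Walk.steps_lift]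

/-- Lifting a closed trail along an inclusion of hypergraphs. -/
def ClosedTrail.lift {H1 H2 : HGraph V β} (hv : H1.verts ⊆ H2.verts)
    (he : H1.edges ⊆ H2.edges) (hi : ∀ e ∈ H1.edges, H1.inc e ⊆ H2.inc e)
    (T : H1.ClosedTrail) : H2.ClosedTrail where
  base := T.base
  walk := T.walk.lift hv he hi
  two_le := by rw [Walk.edgeList_lift]; exact T.two_le
  nodup := by rw [Walk.edgeList_lift]; exact T.nodup

end HGraph

namespace HGraph

variable [DecidableEq V] [DecidableEq β]

/-- Concatenation of walks. -/
def Walk.append {H : HGraph V β} : ∀ {u v w : V}, H.Walk u v → H.Walk v w → H.Walk u w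
  | _, _, _, .nil _ _, q => q
  | _, _, _, .cons u a w' e he hu ha hne p, q => .cons u a _ e he hu ha hne (p.append q)

/-- Reversal of a walk. -/
def Walk.reverse {H : HGraph V β} : ∀ {u v : V}, H.Walk u v → H.Walk v u
  | _, _, .nil x hx => .nil x hx
  | _, _, .cons u a _ e he hu ha hne p =>
      p.reverse.append (.cons a u u e he ha hu hne.symm (.nil u (H.inc_sub e he hu)))

end HGraph

open HGraph in
/-- Lemma 5.1(i): if `G'` is a connected component of `G^α` with vertex set `J`, then the
subhypergraph of `H^α` induced by `∪_{i ∈ J} V(H_i)` is a connected component of `H^α`. -/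
theorem assign_component_of_assignGraph_component
    {V β I : Type} [DecidableEq V] [DecidableEq β] [DecidableEq I] [Fintype I]
    (H : HGraph V β) (F : Finset β) (P : I → Finset V)
    (hH : H.Connected) (hF : H.IsMinimalEdgeCut F)
    (hP : H.IsComponentPartition F P) (α : β → Sym2 I) (hα : H.IsECA F P α)
    (J : Finset I) (hJ : (HGraph.assignGraph F α).IsComponent J) :
    (H.assign F P α).IsComponent (J.biUnion P) := by
  classical
  set U : Finset V := J.biUnion P with hU
  obtain ⟨⟨hPn, hPsub, huniq, hclose⟩, hconnP⟩ := hP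
  obtain ⟨hJne, hJsub, hJconn, hJclose⟩ := hJ
  -- F consists of edges of H
  have FsubE : F ⊆ H.edges := by
    obtain ⟨⟨S, _, _, _, hFS⟩, _⟩ := hF
    rw [hFS]; exact Finset.filter_subset _ _
  -- partition classes are pairwise disjoint
  have hdis : ∀ {a b : I} {v : V}, v ∈ P a → v ∈ P b → a = b := by
    intro a b v hva hvb
    obtain ⟨i, _, hiu⟩ := huniq v (hPsub a hva)
    exact (hiu a hva).trans (hiu b hvb).symm
  have hPU : ∀ i ∈ J, P i ⊆ U := fun i hi => Finset.subset_biUnion_of_mem P hi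
  -- every α f is of the form s(a,b)
  have hrep : ∀ f : β, ∃ a b : I, α f = s(a, b) := fun f =>
    Sym2.ind (fun a b => ⟨a, b, rfl⟩) (α f)
  -- the edges of assignGraph
  have hincG : ∀ f, ∀ a b : I, α f = s(a, b) →
      (HGraph.assignGraph F α).inc f = ({a, b} : Finset I) := by
    intro f a b hab
    simp [HGraph.assignGraph, hab]
  -- membership in J is closed under edges of assignGraph
  have hJcl : ∀ f ∈ F, ∀ a b : I, α f = s(a, b) → (a ∈ J ∨ b ∈ J) → a ∈ J ∧ b ∈ J := by
    intro f hf a b hab h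
    have hsub := hJclose f hf
    rw [hincG f a b hab] at hsub
    have hne : (({a, b} : Finset I) ∩ J).Nonempty := by
      rcases h with h | h
      · exact ⟨a, Finset.mem_inter.mpr ⟨Finset.mem_insert_self _ _, h⟩⟩
      · exact ⟨b, Finset.mem_inter.mpr ⟨Finset.mem_insert_of_mem (Finset.mem_singleton_self _), h⟩⟩
    have := hsub hne
    exact ⟨this (Finset.mem_insert_self _ _),
      this (Finset.mem_insert_of_mem (Finset.mem_singleton_self _))⟩
  set H' : HGraph V β := (H.assign F P α).induce U with hH'
  -- inc of assign for non-cut edges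
  have hincA : ∀ e ∉ F, (H.assign F P α).inc e = H.inc e := by
    intro e he; simp [HGraph.assign, he]
  have hincAF : ∀ f ∈ F, ∀ a b : I, α f = s(a, b) →
      (H.assign F P α).inc f = H.inc f ∩ (P a ∪ P b) := by
    intro f hf a b hab; simp [HGraph.assign, hf, hab, HGraph.pairFinset]
  -- walks within a single class
  have hwithin : ∀ i ∈ J, ∀ u ∈ P i, ∀ v ∈ P i, Nonempty (H'.Walk u v) := by
    intro i hi u hu v hv
    obtain ⟨w⟩ := hconnP i u hu v hv
    refine ⟨w.lift ?_ ?_ ?_⟩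
    · exact hPU i hi
    · intro e he
      replace he : (e ∈ H.edges ∧ e ∉ F) ∧ (H.inc e ∩ P i).Nonempty :=
        ⟨Finset.mem_sdiff.mp (Finset.mem_filter.mp he).1, (Finset.mem_filter.mp he).2⟩
      obtain ⟨⟨heE, heF⟩, hene⟩ := he
      refine Finset.mem_filter.mpr ⟨heE, ?_⟩
      obtain ⟨x, hx⟩ := hene
      rw [Finset.mem_inter] at hx
      refine ⟨x, Finset.mem_inter.mpr ?_⟩
      rw [hincA e heF]
      exact ⟨hx.1, hPU i hi hx.2⟩
    · intro e he x hx
      replace he : (e ∈ H.edges ∧ e ∉ F) ∧ (H.inc e ∩ P i).Nonempty :=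
        ⟨Finset.mem_sdiff.mp (Finset.mem_filter.mp he).1, (Finset.mem_filter.mp he).2⟩
      change x ∈ H.inc e ∩ P i at hx
      rw [Finset.mem_inter] at hx
      show x ∈ (H.assign F P α).inc e ∩ U
      rw [hincA e he.1.2]
      exact Finset.mem_inter.mpr ⟨hx.1, hPU i hi hx.2⟩
  -- walks across a cut edge
  have hstep : ∀ f ∈ F, ∀ a b : I, α f = s(a, b) → a ∈ J → b ∈ J →
      ∀ u ∈ P a, ∀ v ∈ P b, Nonempty (H'.Walk u v) := by
    intro f hf a b hab ha hb u hu v hv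
    by_cases hab' : a = b
    · subst hab'; exact hwithin a ha u hu v hv
    obtain ⟨hxa, hyb, _⟩ := hα f hf a b hab
    obtain ⟨x, hx⟩ := hxa
    obtain ⟨y, hy⟩ := hyb
    rw [Finset.mem_inter] at hx hy
    have hxy : x ≠ y := fun h => hab' (hdis hx.2 (h ▸ hy.2))
    have hxinc : x ∈ H'.inc f := by
      show x ∈ (H.assign F P α).inc f ∩ U
      rw [hincAF f hf a b hab]
      exact Finset.mem_inter.mpr ⟨Finset.mem_inter.mpr
        ⟨hx.1, Finset.mem_union_left _ hx.2⟩, hPU a ha hx.2⟩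
    have hyinc : y ∈ H'.inc f := by
      show y ∈ (H.assign F P α).inc f ∩ U
      rw [hincAF f hf a b hab]
      exact Finset.mem_inter.mpr ⟨Finset.mem_inter.mpr
        ⟨hy.1, Finset.mem_union_right _ hy.2⟩, hPU b hb hy.2⟩
    have hfE : f ∈ H'.edges :=
      Finset.mem_filter.mpr ⟨FsubE hf, ⟨x, Finset.mem_inter.mp hxinc |>.1
        |> fun h => Finset.mem_inter.mpr ⟨h, (Finset.mem_inter.mp hxinc).2⟩⟩⟩
    obtain ⟨w1⟩ := hwithin a ha u hu x hx.2
    obtain ⟨w2⟩ := hwithin b hb y hy.2 v hv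
    exact ⟨w1.append (.cons x y v f hfE hxinc hyinc hxy w2)⟩
  -- walks following a walk in the component of the assign graph
  have hcross : ∀ i j : I, ((HGraph.assignGraph F α).induce J).Walk i j → i ∈ J →
      ∀ u ∈ P i, ∀ v ∈ P j, Nonempty (H'.Walk u v) := by
    intro i j w
    induction w with
    | nil x hx =>
      intro hi u hu v hv; exact hwithin x hx u hu v hv
    | cons i m j f hfE hi hm hne p ih =>
      intro hiJ u hu v hv
      replace hfE : f ∈ F ∧ ((HGraph.assignGraph F α).inc f ∩ J).Nonempty := Finset.mem_filter.mp hfE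
      have hfF : f ∈ F := hfE.1
      obtain ⟨a, b, hab⟩ := hrep f
      have hinc : ((HGraph.assignGraph F α).induce J).inc f =
          ({a, b} : Finset I) ∩ J := by
        show (HGraph.assignGraph F α).inc f ∩ J = _
        rw [hincG f a b hab]
      rw [hinc, Finset.mem_inter] at hi hm
      have hmJ : m ∈ J := hm.2
      have hsim : α f = s(i, m) := by
        rw [hab]
        have h1 : i = a ∨ i = b := by simpa using hi.1
        have h2 : m = a ∨ m = b := by simpa using hm.1
        rcases h1 with h1 | h1 <;> rcases h2 with h2 | h2 <;> subst h1 <;> subst h2 <;>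
          first
          | exact (hne rfl).elim
          | rfl
          | exact Sym2.eq_swap
      obtain ⟨z, hz⟩ := hPn m
      obtain ⟨w1⟩ := hstep f hfF i m hsim hiJ hmJ u hu z hz
      obtain ⟨w2⟩ := ih hmJ z hz v hv
      exact ⟨w1.append w2⟩
  refine ⟨?_, ?_, ?_, ?_⟩
  · obtain ⟨i, hi⟩ := hJne
    obtain ⟨x, hx⟩ := hPn i
    exact ⟨x, Finset.mem_biUnion.mpr ⟨i, hi, hx⟩⟩
  · intro x hx
    obtain ⟨i, _, hxi⟩ := Finset.mem_biUnion.mp hx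
    exact hPsub i hxi
  · intro u hu v hv
    obtain ⟨i, hiJ, hui⟩ := Finset.mem_biUnion.mp hu
    obtain ⟨j, hjJ, hvj⟩ := Finset.mem_biUnion.mp hv
    obtain ⟨w⟩ := hJconn i hiJ j hjJ
    exact hcross i j w hiJ u hui v hvj
  · intro e heE hene
    by_cases heF : e ∈ F
    · obtain ⟨a, b, hab⟩ := hrep e
      obtain ⟨x, hx⟩ := hene
      rw [Finset.mem_inter, hincAF e heF a b hab, Finset.mem_inter] at hx
      obtain ⟨⟨_, hxab⟩, hxU⟩ := hx
      obtain ⟨c, hcJ, hxc⟩ := Finset.mem_biUnion.mp hxU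
      have habJ : a ∈ J ∨ b ∈ J := by
        rcases Finset.mem_union.mp hxab with h | h
        · exact Or.inl ((hdis h hxc) ▸ hcJ)
        · exact Or.inr ((hdis h hxc) ▸ hcJ)
      obtain ⟨haJ, hbJ⟩ := hJcl e heF a b hab habJ
      rw [hincAF e heF a b hab]
      intro y hy
      rw [Finset.mem_inter] at hy
      rcases Finset.mem_union.mp hy.2 with h | h
      · exact hPU a haJ h
      · exact hPU b hbJ h
    · rw [hincA e heF]
      rw [hincA e heF] at hene  -- may fail if inc in hene is assign's; handle below
      obtain ⟨x, hx⟩ := hene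
      rw [Finset.mem_inter] at hx
      obtain ⟨c, hcJ, hxc⟩ := Finset.mem_biUnion.mp hx.2
      have : H.inc e ⊆ P c := hclose e heE heF c ⟨x, Finset.mem_inter.mpr ⟨hx.1, hxc⟩⟩
      exact this.trans (hPU c hcJ)
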